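/- Let f : ℝⁿ → ℝ be differentiable at x ∈ Ω. Then χ(x) ≥ 0, and χ(x) = 0 if and only if x is a KKT point of the box-constrained problem min_{y ∈ Ω} f(y), i.e., for every index i: (∇f(x))_i = 0 whenever l_i < x_i < u_i, (∇f(x))_i ≥ 0 whenever x_i = l_i, and (∇f(x))_i ≤ 0 whenever x_i = u_i. -/

import Mathlib

/-- The stationarity measure χ is nonnegative, and vanishes exactly at KKT points
  of the box-constrained problem. -/
theorem stmt_12 (n : ℕ) (hn : 1 ≤ n)
    (l u : Fin n → ℝ) (hlu : ∀ i, l i < u i)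
    (Ω : Set (EuclideanSpace ℝ (Fin n)))
    (hΩ : Ω = {y | ∀ i, l i ≤ y i ∧ y i ≤ u i})
    (f : EuclideanSpace ℝ (Fin n) → ℝ)
    (x : EuclideanSpace ℝ (Fin n)) (hx : x ∈ Ω)
    (hdiff : DifferentiableAt ℝ f x)
    (χ : ℝ)
    (hχ : χ = sSup {r : ℝ | ∃ ω : EuclideanSpace ℝ (Fin n),
        x + ω ∈ Ω ∧ ‖ω‖ ≤ 1 ∧ r = -(inner ℝ (gradient f x) ω : ℝ)}) :
    0 ≤ χ ∧
      (χ = 0 ↔ ∀ i : Fin n,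
        (l i < x i → x i < u i → gradient f x i = 0)
        ∧ (x i = l i → 0 ≤ gradient f x i)
        ∧ (x i = u i → gradient f x i ≤ 0)) := by
  set g := gradient f x with hg
  set S : Set ℝ := {r : ℝ | ∃ ω : EuclideanSpace ℝ (Fin n),
        x + ω ∈ Ω ∧ ‖ω‖ ≤ 1 ∧ r = -(inner ℝ g ω : ℝ)} with hS
  have hx' : ∀ i, l i ≤ x i ∧ x i ≤ u i := by rw [hΩ] at hx; exact hx
  have h0S : (0:ℝ) ∈ S := ⟨0, by simpa using hx, by simp, by simp⟩
  have hbdd : BddAbove S := by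
    refine ⟨‖g‖, ?_⟩
    rintro r ⟨ω, hω1, hω2, rfl⟩
    calc -(inner ℝ g ω : ℝ) ≤ |(inner ℝ g ω : ℝ)| := neg_le_abs _
      _ ≤ ‖g‖ * ‖ω‖ := abs_real_inner_le_norm g ω
      _ ≤ ‖g‖ * 1 := by nlinarith [norm_nonneg g]
      _ = ‖g‖ := mul_one _
  have hχ0 : 0 ≤ χ := hχ ▸ le_csSup hbdd h0S
  have hinner : ∀ ω : EuclideanSpace ℝ (Fin n),
      (inner ℝ g ω : ℝ) = ∑ i, g i * ω i := by
    intro ω; simp [PiLp.inner_apply, RCLike.inner_apply, mul_comm]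
  refine ⟨hχ0, ?_, ?_⟩
  · -- χ = 0 → KKT
    intro hz i
    have key : ∀ c : ℝ, l i ≤ x i + c → x i + c ≤ u i → |c| ≤ 1 → 0 ≤ g i * c := by
      intro c hc1 hc2 hc3
      have hmem : x + EuclideanSpace.single i c ∈ Ω := by
        rw [hΩ]
        intro j
        by_cases hji : j = i
        · subst hji; simpa [EuclideanSpace.single_apply] using ⟨hc1, hc2⟩
        · simpa [EuclideanSpace.single_apply, hji] using hx' j
      have hnorm : ‖EuclideanSpace.single i c‖ ≤ 1 := by
        rw [EuclideanSpace.norm_single]; simpa using hc3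
      have hmemS : -(inner ℝ g (EuclideanSpace.single i c) : ℝ) ∈ S :=
        ⟨_, hmem, hnorm, rfl⟩
      have hle : -(inner ℝ g (EuclideanSpace.single i c) : ℝ) ≤ 0 := by
        have := le_csSup hbdd hmemS
        rw [← hχ, hz] at this; exact this
      have hip : (inner ℝ g (EuclideanSpace.single i c) : ℝ) = g i * c := by
        rw [hinner]
        rw [Finset.sum_eq_single i]
        · simp [EuclideanSpace.single_apply]
        · intro j _ hji; simp [EuclideanSpace.single_apply, hji]
        · simp
      rw [hip] at hle; linarith
    have hA : l i < x i → g i ≤ 0 := by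
      intro hl
      set c : ℝ := max (l i - x i) (-1) with hc
      have hcneg : c < 0 := by
        apply max_lt; linarith; linarith
      have h1 : l i ≤ x i + c := by
        have := le_max_left (l i - x i) (-1); linarith
      have h2 : x i + c ≤ u i := by
        have := (hx' i).2; linarith
      have h3 : |c| ≤ 1 := by
        rw [abs_le]; constructor
        · exact le_max_right _ _
        · linarith
      have := key c h1 h2 h3
      nlinarith
    have hB : x i < u i → 0 ≤ g i := by
      intro hu
      set c : ℝ := min (u i - x i) 1 with hc
      have hcpos : 0 < c := by
        apply lt_min; linarith; linarith
      have h1 : l i ≤ x i + c := by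
        have := (hx' i).1; linarith
      have h2 : x i + c ≤ u i := by
        have := min_le_left (u i - x i) 1; linarith
      have h3 : |c| ≤ 1 := by
        rw [abs_le]; constructor
        · linarith
        · exact min_le_right _ _
      have := key c h1 h2 h3
      nlinarith
    refine ⟨fun hl hu => le_antisymm (hA hl) (hB hu), ?_, ?_⟩
    · intro hl; exact hB (hl ▸ hlu i)
    · intro hu; exact hA (hu ▸ hlu i)
  · -- KKT → χ = 0
    intro hk
    refine le_antisymm ?_ hχ0
    rw [hχ]
    apply Real.sSup_le _ le_rfl
    rintro r ⟨ω, hω1, hω2, rfl⟩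
    rw [hΩ] at hω1
    have : 0 ≤ (inner ℝ g ω : ℝ) := by
      rw [hinner]
      apply Finset.sum_nonneg
      intro i _
      obtain ⟨hk1, hk2, hk3⟩ := hk i
      have hc1 : l i ≤ x i + ω i := by simpa using (hω1 i).1
      have hc2 : x i + ω i ≤ u i := by simpa using (hω1 i).2
      rcases eq_or_lt_of_le (hx' i).1 with hl | hl
      · exact mul_nonneg (hk2 hl.symm) (by rw [← hl] at hc1; linarith)
      rcases eq_or_lt_of_le (hx' i).2 with hu | hu
      · have h1 := hk3 hu; have h2 : ω i ≤ 0 := by rw [hu] at hc2; linarith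
        nlinarith
      · rw [hk1 hl hu]; simp
    linarith
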